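/- arXiv:2512.18634 — 3 statements merged into one kernel-verified Lean document; each statement's English description precedes it below -/
import Mathlib

section
/- Let U ≥ N ≥ 1 be integers. For every vector q = (q_1,...,q_U) ∈ ℝ^U that is feasible for the linear program ℙ (i.e., q_ℓ ≥ 0 for all ℓ, Σ_{ℓ=1}^U q_ℓ = 1, and q_ℓ·ℓ^{-1} ≤ N^{-1}·Σ_{ℓ'=1}^U q_{ℓ'}·(ℓ')^{-1} for all ℓ), the objective satisfies Σ_{ℓ=1}^U q_ℓ·ℓ² ≥ N(N+1)/2. In particular the vector q* with q*_ℓ = 2ℓ/(N(N+1)) for ℓ ≤ N and q*_ℓ = 0 for ℓ > N is an optimal solution of ℙ. -/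
/-- The candidate optimal solution of the linear program ℙ:
`q*_ℓ = 2ℓ/(N(N+1))` for `1 ≤ ℓ ≤ N` and `q*_ℓ = 0` for `ℓ > N`. -/
noncomputable def qStar (N : ℕ) (ℓ : ℕ) : ℝ :=
  if ℓ ≤ N then 2 * (ℓ : ℝ) / ((N : ℝ) * ((N : ℝ) + 1)) else 0

/-- Feasibility for the linear program ℙ: nonnegative coordinates summing to one,
with `q_ℓ ℓ⁻¹ ≤ N⁻¹ Σ_{ℓ'} q_{ℓ'} (ℓ')⁻¹` for every `ℓ ∈ {1,…,U}`. -/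
def Feasible (U N : ℕ) (q : ℕ → ℝ) : Prop :=
  (∀ ℓ ∈ Finset.Icc 1 U, 0 ≤ q ℓ) ∧
  (∑ ℓ ∈ Finset.Icc 1 U, q ℓ = 1) ∧
  (∀ ℓ ∈ Finset.Icc 1 U,
    q ℓ * (ℓ : ℝ)⁻¹ ≤ (N : ℝ)⁻¹ * ∑ ℓ' ∈ Finset.Icc 1 U, q ℓ' * (ℓ' : ℝ)⁻¹)

open Finset
lemma sum_Icc_id_real (N : ℕ) : ∑ ℓ ∈ Icc 1 N, (ℓ:ℝ) = N*(N+1)/2 := by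
  induction N with
  | zero => simp
  | succ n ih =>
    rw [Finset.sum_Icc_succ_top (by omega)] ; push_cast; rw [ih]; ring

lemma sum_Icc_cube_real (N : ℕ) : ∑ ℓ ∈ Icc 1 N, (ℓ:ℝ)^3 = (N*(N+1)/2)^2 := by
  induction N with
  | zero => simp
  | succ n ih =>
    rw [Finset.sum_Icc_succ_top (by omega)] ; push_cast; rw [ih]; ring

lemma sum_restrict (U N : ℕ) (hUN : N ≤ U) (f : ℕ → ℝ)
    (hf : ∀ ℓ, N < ℓ → f ℓ = 0) :
    ∑ ℓ ∈ Icc 1 U, f ℓ = ∑ ℓ ∈ Icc 1 N, f ℓ := by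
  refine (Finset.sum_subset (Finset.Icc_subset_Icc_right hUN) ?_).symm
  intro x hx hx'
  simp only [mem_Icc] at hx hx'
  exact hf x (by omega)

lemma lp_lb (U N : ℕ) (hN : 1 ≤ N) (hUN : N ≤ U) (q : ℕ → ℝ) (hq : Feasible U N q) :
    (N : ℝ) * ((N : ℝ) + 1) / 2 ≤ ∑ ℓ ∈ Icc 1 U, q ℓ * (ℓ : ℝ) ^ 2 := by
  obtain ⟨hq0, hq1, hqc⟩ := hq
  have hn1 : (1:ℝ) ≤ (N:ℝ) := by exact_mod_cast hN
  have hn0 : (0:ℝ) < (N:ℝ) := by linarith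
  set lam : ℝ := (N:ℝ)*((N:ℝ)+1)/2 with hlam
  set M' : ℝ := (N:ℝ)^2*((N:ℝ)-1)/2 with hM'
  set μ : ℕ → ℝ := fun ℓ => if ℓ ≤ N then lam*(ℓ:ℝ) + M' - (ℓ:ℝ)^3 else 0 with hμ
  set S : ℝ := ∑ ℓ' ∈ Icc 1 U, q ℓ' * (ℓ':ℝ)⁻¹ with hS
  -- pointwise facts
  have hμ0 : ∀ ℓ ∈ Icc 1 U, 0 ≤ μ ℓ := by
    intro ℓ hℓ
    simp only [hμ]
    by_cases h : ℓ ≤ N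
    · rw [if_pos h]
      have hx1 : (1:ℝ) ≤ (ℓ:ℝ) := by exact_mod_cast (mem_Icc.1 hℓ).1
      have hxn : (ℓ:ℝ) ≤ (N:ℝ) := by exact_mod_cast h
      have hquad : (0:ℝ) ≤ (ℓ:ℝ)^2 + (N:ℝ)*(ℓ:ℝ) + (N:ℝ)^2 - lam := by rw [hlam]; nlinarith
      nlinarith [mul_nonneg (sub_nonneg.2 hxn) hquad]
    · rw [if_neg h]
  have hμsum : ∑ ℓ ∈ Icc 1 U, μ ℓ = (N:ℝ) * M' := by
    rw [sum_restrict U N hUN _ (by intro ℓ h; simp only [hμ]; rw [if_neg (by omega)])]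
    have : ∀ ℓ ∈ Icc 1 N, μ ℓ = lam*(ℓ:ℝ) + M' - (ℓ:ℝ)^3 := by
      intro ℓ hℓ; simp only [hμ]; rw [if_pos (mem_Icc.1 hℓ).2]
    rw [Finset.sum_congr rfl this]
    rw [Finset.sum_sub_distrib, Finset.sum_add_distrib, ← Finset.mul_sum,
      sum_Icc_id_real, sum_Icc_cube_real, Finset.sum_const, Nat.card_Icc]
    simp only [Nat.add_sub_cancel, nsmul_eq_mul]
    rw [hlam, hM']; ring
  have key : ∀ ℓ ∈ Icc 1 U,
      q ℓ * lam + M' * (q ℓ * (ℓ:ℝ)⁻¹) - μ ℓ * (q ℓ * (ℓ:ℝ)⁻¹) ≤ q ℓ * (ℓ:ℝ)^2 := by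
    intro ℓ hℓ
    have hx1 : (1:ℝ) ≤ (ℓ:ℝ) := by exact_mod_cast (mem_Icc.1 hℓ).1
    have hx0 : (0:ℝ) < (ℓ:ℝ) := by linarith
    have h3 : lam * (ℓ:ℝ) + (M' - μ ℓ) ≤ (ℓ:ℝ)^3 := by
      simp only [hμ]
      by_cases h : ℓ ≤ N
      · rw [if_pos h]
        exact le_of_eq (by ring)
      · rw [if_neg h]
        have hxn : (N:ℝ) + 1 ≤ (ℓ:ℝ) := by
          exact_mod_cast Nat.succ_le_of_lt (by omega)
        rw [hlam, hM']
        nlinarith [mul_nonneg (sub_nonneg.2 hxn) (sub_nonneg.2 hxn),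
          mul_nonneg (mul_nonneg (sub_nonneg.2 hxn) (sub_nonneg.2 hxn)) (sub_nonneg.2 hxn)]
    have hb : (lam * (ℓ:ℝ) + (M' - μ ℓ)) / (ℓ:ℝ) ≤ (ℓ:ℝ)^2 := by
      rw [div_le_iff₀ hx0]; nlinarith
    have := mul_le_mul_of_nonneg_left hb (hq0 ℓ hℓ)
    calc q ℓ * lam + M' * (q ℓ * (ℓ:ℝ)⁻¹) - μ ℓ * (q ℓ * (ℓ:ℝ)⁻¹)
        = q ℓ * ((lam * (ℓ:ℝ) + (M' - μ ℓ)) / (ℓ:ℝ)) := by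
          field_simp; ring
      _ ≤ q ℓ * (ℓ:ℝ)^2 := this
  have hTle : ∑ ℓ ∈ Icc 1 U, μ ℓ * (q ℓ * (ℓ:ℝ)⁻¹) ≤ M' * S := by
    calc ∑ ℓ ∈ Icc 1 U, μ ℓ * (q ℓ * (ℓ:ℝ)⁻¹)
        ≤ ∑ ℓ ∈ Icc 1 U, μ ℓ * ((N:ℝ)⁻¹ * S) := by
          refine Finset.sum_le_sum fun ℓ hℓ => ?_
          exact mul_le_mul_of_nonneg_left (hqc ℓ hℓ) (hμ0 ℓ hℓ)
      _ = (∑ ℓ ∈ Icc 1 U, μ ℓ) * ((N:ℝ)⁻¹ * S) := (Finset.sum_mul _ _ _).symm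
      _ = (N:ℝ) * M' * ((N:ℝ)⁻¹ * S) := by rw [hμsum]
      _ = M' * S := by field_simp
  have hsum : lam + M' * S - ∑ ℓ ∈ Icc 1 U, μ ℓ * (q ℓ * (ℓ:ℝ)⁻¹)
      ≤ ∑ ℓ ∈ Icc 1 U, q ℓ * (ℓ:ℝ)^2 := by
    have := Finset.sum_le_sum key
    rw [Finset.sum_sub_distrib, Finset.sum_add_distrib, ← Finset.mul_sum,
      ← Finset.sum_mul, hq1] at this
    calc lam + M' * S - ∑ ℓ ∈ Icc 1 U, μ ℓ * (q ℓ * (ℓ:ℝ)⁻¹)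
        = 1 * lam + M' * S - ∑ ℓ ∈ Icc 1 U, μ ℓ * (q ℓ * (ℓ:ℝ)⁻¹) := by ring
      _ ≤ _ := this
  linarith

lemma qStar_zero (N : ℕ) (ℓ : ℕ) (h : N < ℓ) : qStar N ℓ = 0 := by
  simp [qStar]; omega

lemma qStar_feasible (U N : ℕ) (hN : 1 ≤ N) (hUN : N ≤ U) : Feasible U N (qStar N) := by
  have hn1 : (1:ℝ) ≤ (N:ℝ) := by exact_mod_cast hN
  have hn0 : (0:ℝ) < (N:ℝ) := by linarith
  have hden : (0:ℝ) < (N:ℝ) * ((N:ℝ)+1) := by nlinarith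
  have hSstar : ∑ ℓ' ∈ Finset.Icc 1 U, qStar N ℓ' * (ℓ':ℝ)⁻¹ = 2/((N:ℝ)+1) := by
    rw [sum_restrict U N hUN _ (fun ℓ h => by rw [qStar_zero N ℓ h, zero_mul])]
    have : ∀ ℓ ∈ Icc 1 N, qStar N ℓ * (ℓ:ℝ)⁻¹ = 2/((N:ℝ)*((N:ℝ)+1)) := by
      intro ℓ hℓ
      obtain ⟨h1, h2⟩ := mem_Icc.1 hℓ
      have hx0 : (0:ℝ) < (ℓ:ℝ) := by exact_mod_cast Nat.lt_of_lt_of_le Nat.zero_lt_one h1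
      rw [qStar, if_pos h2]
      field_simp
    rw [Finset.sum_congr rfl this, Finset.sum_const, Nat.card_Icc]
    simp only [Nat.add_sub_cancel, nsmul_eq_mul]
    field_simp
  refine ⟨?_, ?_, ?_⟩
  · intro ℓ hℓ
    rw [qStar]
    split
    · positivity
    · exact le_rfl
  · rw [sum_restrict U N hUN _ (fun ℓ h => qStar_zero N ℓ h)]
    have : ∀ ℓ ∈ Icc 1 N, qStar N ℓ = 2*(ℓ:ℝ)/((N:ℝ)*((N:ℝ)+1)) := by
      intro ℓ hℓ; rw [qStar, if_pos (mem_Icc.1 hℓ).2]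
    rw [Finset.sum_congr rfl this]
    simp_rw [div_eq_mul_inv, mul_assoc]
    rw [← Finset.mul_sum, ← Finset.sum_mul, sum_Icc_id_real]
    field_simp
  · intro ℓ hℓ
    rw [hSstar]
    by_cases h : ℓ ≤ N
    · obtain ⟨h1, h2⟩ := mem_Icc.1 hℓ
      have hx0 : (0:ℝ) < (ℓ:ℝ) := by exact_mod_cast Nat.lt_of_lt_of_le Nat.zero_lt_one h1
      rw [qStar, if_pos h]
      rw [div_mul_eq_mul_div, mul_comm]
      apply le_of_eq
      field_simp
    · rw [qStar_zero N ℓ (by omega), zero_mul]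
      positivity

lemma qStar_obj (U N : ℕ) (hN : 1 ≤ N) (hUN : N ≤ U) :
    ∑ ℓ ∈ Finset.Icc 1 U, qStar N ℓ * (ℓ:ℝ)^2 = (N:ℝ) * ((N:ℝ)+1) / 2 := by
  have hn1 : (1:ℝ) ≤ (N:ℝ) := by exact_mod_cast hN
  rw [sum_restrict U N hUN _ (fun ℓ h => by rw [qStar_zero N ℓ h, zero_mul])]
  have : ∀ ℓ ∈ Icc 1 N, qStar N ℓ * (ℓ:ℝ)^2 = (2/((N:ℝ)*((N:ℝ)+1))) * (ℓ:ℝ)^3 := by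
    intro ℓ hℓ
    rw [qStar, if_pos (mem_Icc.1 hℓ).2]
    ring
  rw [Finset.sum_congr rfl this, ← Finset.mul_sum, sum_Icc_cube_real]
  field_simp

/-- every feasible `q` has objective at least `N(N+1)/2`;
in particular `q*` is an optimal solution of ℙ. -/
theorem lp_lower_bound_and_qStar_optimal (U N : ℕ) (hN : 1 ≤ N) (hUN : N ≤ U) :
    (∀ q : ℕ → ℝ, Feasible U N q →
      (N : ℝ) * ((N : ℝ) + 1) / 2 ≤ ∑ ℓ ∈ Finset.Icc 1 U, q ℓ * (ℓ : ℝ) ^ 2) ∧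
    Feasible U N (qStar N) ∧
    (∀ q : ℕ → ℝ, Feasible U N q →
      ∑ ℓ ∈ Finset.Icc 1 U, qStar N ℓ * (ℓ : ℝ) ^ 2
        ≤ ∑ ℓ ∈ Finset.Icc 1 U, q ℓ * (ℓ : ℝ) ^ 2) := by

  refine ⟨fun q hq => lp_lb U N hN hUN q hq, qStar_feasible U N hN hUN, fun q hq => ?_⟩
  rw [qStar_obj U N hN hUN]
  exact lp_lb U N hN hUN q hq
end

section
/- Let U ≥ N ≥ 1 be integers. The linear program ℙ has a unique optimal solution: if q = (q_1,...,q_U) ∈ ℝ^U is feasible for ℙ and attains the minimal objective value Σ_{ℓ=1}^U q_ℓ·ℓ² = N(N+1)/2, then q_ℓ = 2ℓ/(N(N+1)) for every 1 ≤ ℓ ≤ N and q_ℓ = 0 for every N < ℓ ≤ U. -/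
open Finset

lemma sum_id_real (n : ℕ) : ∑ ℓ ∈ Finset.Icc 1 n, (ℓ:ℝ) = n*(n+1)/2 := by
  induction n with
  | zero => simp
  | succ k ih => rw [Finset.sum_Icc_succ_top (by omega), ih]; push_cast; ring

lemma sum_cube_real (n : ℕ) : ∑ ℓ ∈ Finset.Icc 1 n, (ℓ:ℝ)^3 = (n*(n+1)/2)^2 := by
  induction n with
  | zero => simp
  | succ k ih => rw [Finset.sum_Icc_succ_top (by omega), ih]; push_cast; ring

lemma split_sum (N U : ℕ) (h : N ≤ U) (f : ℕ → ℝ) :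
    (∑ ℓ ∈ Finset.Icc 1 N, f ℓ) + (∑ ℓ ∈ Finset.Ioc N U, f ℓ) = ∑ ℓ ∈ Finset.Icc 1 U, f ℓ := by
  rw [show Finset.Icc 1 N = Finset.Ioc 0 N from Finset.Icc_add_one_left_eq_Ioc 0 N,
      show Finset.Icc 1 U = Finset.Ioc 0 U from Finset.Icc_add_one_left_eq_Ioc 0 U]
  exact Finset.sum_Ioc_consecutive f (Nat.zero_le N) h

set_option maxHeartbeats 1600000 in
/-- the linear program ℙ has a unique optimal solution: any feasible `q`
attaining the minimal objective value `N(N+1)/2` must equal `q*`, i.e.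
`q_ℓ = 2ℓ/(N(N+1))` for `1 ≤ ℓ ≤ N` and `q_ℓ = 0` for `N < ℓ ≤ U`. -/
theorem lp_unique_optimum (U N : ℕ) (hN : 1 ≤ N) (hUN : N ≤ U) (q : ℕ → ℝ)
    (hfeas : Feasible U N q)
    (hopt : ∑ ℓ ∈ Finset.Icc 1 U, q ℓ * (ℓ : ℝ) ^ 2 = (N : ℝ) * ((N : ℝ) + 1) / 2) :
    (∀ ℓ, 1 ≤ ℓ → ℓ ≤ N → q ℓ = 2 * (ℓ : ℝ) / ((N : ℝ) * ((N : ℝ) + 1))) ∧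
    (∀ ℓ, N < ℓ → ℓ ≤ U → q ℓ = 0) := by
  obtain ⟨hnn, hsum, hcon⟩ := hfeas
  set n : ℝ := (N : ℝ) with hn
  have hn1 : (1:ℝ) ≤ n := by rw [hn]; exact_mod_cast hN
  have hn0 : (0:ℝ) < n := lt_of_lt_of_le one_pos hn1
  set t : ℝ := n * (n + 1) / 2 with ht
  set A : ℝ := (n^2*(n-1) + (n+1)^2*(n+2))/4 with hA
  set S : ℝ := ∑ ℓ' ∈ Finset.Icc 1 U, q ℓ' * (ℓ' : ℝ)⁻¹ with hS
  -- membership helpers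
  have memIcc : ∀ ℓ ∈ Finset.Icc 1 N, ℓ ∈ Finset.Icc 1 U := by
    intro ℓ hℓ; simp only [Finset.mem_Icc] at *; omega
  have memIoc : ∀ ℓ ∈ Finset.Ioc N U, ℓ ∈ Finset.Icc 1 U := by
    intro ℓ hℓ; simp only [Finset.mem_Ioc, Finset.mem_Icc] at *; omega
  -- positivity of the dual multipliers
  have hc_pos : ∀ ℓ ∈ Finset.Icc 1 N, 0 < A + t * ℓ - (ℓ:ℝ)^3 := by
    intro ℓ hℓ
    simp only [Finset.mem_Icc] at hℓ
    have hx1 : (1:ℝ) ≤ (ℓ:ℝ) := by exact_mod_cast hℓ.1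
    have hxN : (ℓ:ℝ) ≤ n := by rw [hn]; exact_mod_cast hℓ.2
    set x : ℝ := (ℓ:ℝ)
    have key : x^3 - t*x ≤ n^3 - t*n := by
      nlinarith [mul_nonneg (sub_nonneg.2 hxN)
        (show (0:ℝ) ≤ n^2 + n*x + x^2 - t by nlinarith)]
    have : n^3 - t*n < A := by rw [ht, hA]; nlinarith
    nlinarith
  have hslack : ∀ ℓ ∈ Finset.Ioc N U, 0 < (ℓ:ℝ)^2 - t - A * (ℓ:ℝ)⁻¹ := by
    intro ℓ hℓ
    simp only [Finset.mem_Ioc] at hℓ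
    have hx1 : n + 1 ≤ (ℓ:ℝ) := by
      have h' : N + 1 ≤ ℓ := hℓ.1
      rw [hn]
      exact_mod_cast h'
    set x : ℝ := (ℓ:ℝ)
    have hx0 : (0:ℝ) < x := by nlinarith
    have h3 : 0 < x^3 - t*x - A := by
      have key : (n+1)^3 - t*(n+1) ≤ x^3 - t*x := by
        nlinarith [mul_nonneg (sub_nonneg.2 hx1)
          (show (0:ℝ) ≤ x^2 + x*(n+1) + (n+1)^2 - t by nlinarith)]
      have : A < (n+1)^3 - t*(n+1) := by rw [ht, hA]; nlinarith
      nlinarith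
    have := div_pos h3 hx0
    have heq : (x^3 - t*x - A) / x = x^2 - t - A * x⁻¹ := by
      field_simp
    rwa [heq] at this
  -- the two nonnegative slack sums
  set T1 : ℝ := ∑ ℓ ∈ Finset.Icc 1 N,
      (A + t * ℓ - (ℓ:ℝ)^3) * ((N:ℝ)⁻¹ * S - q ℓ * (ℓ:ℝ)⁻¹) with hT1
  set T2 : ℝ := ∑ ℓ ∈ Finset.Ioc N U, q ℓ * ((ℓ:ℝ)^2 - t - A * (ℓ:ℝ)⁻¹) with hT2
  have hT1nn : ∀ ℓ ∈ Finset.Icc 1 N,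
      0 ≤ (A + t * ℓ - (ℓ:ℝ)^3) * ((N:ℝ)⁻¹ * S - q ℓ * (ℓ:ℝ)⁻¹) := by
    intro ℓ hℓ
    exact mul_nonneg (le_of_lt (hc_pos ℓ hℓ)) (sub_nonneg.2 (hcon ℓ (memIcc ℓ hℓ)))
  have hT2nn : ∀ ℓ ∈ Finset.Ioc N U, 0 ≤ q ℓ * ((ℓ:ℝ)^2 - t - A * (ℓ:ℝ)⁻¹) := by
    intro ℓ hℓ
    exact mul_nonneg (hnn ℓ (memIoc ℓ hℓ)) (le_of_lt (hslack ℓ hℓ))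
  -- sum of dual multipliers
  have hsum_c : ∑ ℓ ∈ Finset.Icc 1 N, (A + t * ℓ - (ℓ:ℝ)^3) = n * A := by
    rw [Finset.sum_sub_distrib, Finset.sum_add_distrib, Finset.sum_const,
        ← Finset.mul_sum, sum_id_real, sum_cube_real, Nat.card_Icc]
    have hcard : ((N + 1 - 1 : ℕ) : ℝ) = n := by rw [hn]; norm_num
    rw [nsmul_eq_mul, hcard, ht]
    ring
  -- expand T1
  have e1 : T1 = n * A * ((N:ℝ)⁻¹ * S)
      - (A * (∑ ℓ ∈ Finset.Icc 1 N, q ℓ * (ℓ:ℝ)⁻¹)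
        + t * (∑ ℓ ∈ Finset.Icc 1 N, q ℓ)
        - (∑ ℓ ∈ Finset.Icc 1 N, q ℓ * (ℓ:ℝ)^2)) := by
    have step : T1 = ∑ ℓ ∈ Finset.Icc 1 N,
        ((A + t * ℓ - (ℓ:ℝ)^3) * ((N:ℝ)⁻¹ * S)
          - (A * (q ℓ * (ℓ:ℝ)⁻¹) + t * q ℓ - q ℓ * (ℓ:ℝ)^2)) := by
      rw [hT1]
      refine Finset.sum_congr rfl ?_
      intro ℓ hℓ
      simp only [Finset.mem_Icc] at hℓ
      have hx0 : ((ℓ:ℝ)) ≠ 0 := by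
        have : (0:ℕ) < ℓ := hℓ.1
        positivity
      field_simp
    rw [step, Finset.sum_sub_distrib, ← Finset.sum_mul, hsum_c, Finset.sum_sub_distrib,
        Finset.sum_add_distrib, ← Finset.mul_sum, ← Finset.mul_sum]
  -- expand T2
  have e2 : T2 = (∑ ℓ ∈ Finset.Ioc N U, q ℓ * (ℓ:ℝ)^2)
      - t * (∑ ℓ ∈ Finset.Ioc N U, q ℓ)
      - A * (∑ ℓ ∈ Finset.Ioc N U, q ℓ * (ℓ:ℝ)⁻¹) := by
    have step : T2 = ∑ ℓ ∈ Finset.Ioc N U,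
        (q ℓ * (ℓ:ℝ)^2 - t * q ℓ - A * (q ℓ * (ℓ:ℝ)⁻¹)) := by
      rw [hT2]
      refine Finset.sum_congr rfl ?_
      intro ℓ hℓ; ring
    rw [step, Finset.sum_sub_distrib, Finset.sum_sub_distrib, ← Finset.mul_sum, ← Finset.mul_sum]
  -- key identity : T1 + T2 = objective - t
  have key : T1 + T2 = (∑ ℓ ∈ Finset.Icc 1 U, q ℓ * (ℓ:ℝ)^2) - t := by
    rw [e1, e2]
    have s1 := split_sum N U hUN (fun ℓ => q ℓ * (ℓ:ℝ)^2)
    have s2 := split_sum N U hUN q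
    have s3 := split_sum N U hUN (fun ℓ => q ℓ * (ℓ:ℝ)⁻¹)
    have hNinv : n * A * ((N:ℝ)⁻¹ * S) = A * S := by
      rw [hn]; field_simp
    rw [hNinv]
    rw [← hS] at s3
    linear_combination s1 - A * s3 - t * s2 - t * hsum
  have hzero : T1 + T2 = 0 := by rw [key, hopt, ht]; ring
  have hT1z : T1 = 0 := by
    have h1 : 0 ≤ T1 := Finset.sum_nonneg hT1nn
    have h2 : 0 ≤ T2 := Finset.sum_nonneg hT2nn
    linarith
  have hT2z : T2 = 0 := by
    have h1 : 0 ≤ T1 := Finset.sum_nonneg hT1nn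
    linarith
  -- q vanishes above N
  have hqzero : ∀ ℓ ∈ Finset.Ioc N U, q ℓ = 0 := by
    intro ℓ hℓ
    have := (Finset.sum_eq_zero_iff_of_nonneg hT2nn).1 hT2z ℓ hℓ
    rcases mul_eq_zero.1 this with h | h
    · exact h
    · exact absurd h (ne_of_gt (hslack ℓ hℓ))
  -- the constraint is tight below N
  have hqtight : ∀ ℓ ∈ Finset.Icc 1 N, q ℓ * (ℓ:ℝ)⁻¹ = (N:ℝ)⁻¹ * S := by
    intro ℓ hℓ
    have := (Finset.sum_eq_zero_iff_of_nonneg hT1nn).1 hT1z ℓ hℓ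
    rcases mul_eq_zero.1 this with h | h
    · exact absurd h (ne_of_gt (hc_pos ℓ hℓ))
    · linarith [sub_eq_zero.1 h]
  have hq_form : ∀ ℓ ∈ Finset.Icc 1 N, q ℓ = (ℓ:ℝ) * ((N:ℝ)⁻¹ * S) := by
    intro ℓ hℓ
    have h := hqtight ℓ hℓ
    simp only [Finset.mem_Icc] at hℓ
    have hx0 : ((ℓ:ℝ)) ≠ 0 := by
      have : (0:ℕ) < ℓ := hℓ.1
      positivity
    rw [← h]
    field_simp
  -- determine S
  have hSval : S = 2 / (n + 1) := by
    have s2 := split_sum N U hUN q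
    have hz : ∑ ℓ ∈ Finset.Ioc N U, q ℓ = 0 := Finset.sum_eq_zero hqzero
    have h1 : ∑ ℓ ∈ Finset.Icc 1 N, q ℓ = 1 := by rw [← hsum, ← s2, hz]; ring
    have h2 : ∑ ℓ ∈ Finset.Icc 1 N, q ℓ
        = (∑ ℓ ∈ Finset.Icc 1 N, (ℓ:ℝ)) * ((N:ℝ)⁻¹ * S) := by
      rw [Finset.sum_congr rfl hq_form, ← Finset.sum_mul]
    rw [h1, sum_id_real] at h2
    rw [← hn] at h2
    have : n * (n+1)/2 * (n⁻¹ * S) = S * (n+1) / 2 := by field_simp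
    rw [this] at h2
    have hpos : (0:ℝ) < n + 1 := by linarith
    field_simp at h2 ⊢
    linarith
  constructor
  · intro ℓ h1 h2
    have hform := hq_form ℓ (Finset.mem_Icc.2 ⟨h1, h2⟩)
    rw [hSval, ← hn] at hform
    rw [hform]
    have hpos : (0:ℝ) < n + 1 := by linarith
    field_simp
  · intro ℓ h1 h2
    exact hqzero ℓ (Finset.mem_Ioc.2 ⟨h1, h2⟩)
end

section
/- Let N ≥ 1 and let v ∈ ℝ^N satisfy |v_i| ≤ c for all i ∈ {1,...,N}, where c ≥ 0. Then for every i, |Softmax(v)_i − 1/N| ≤ (exp(2c) − 1)/N. -/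
/-- The softmax function on `ℝ^N`: `Softmax(v)_i = exp(v_i) / Σ_j exp(v_j)`. -/
noncomputable def softmax {N : ℕ} (v : Fin N → ℝ) (i : Fin N) : ℝ :=
  Real.exp (v i) / ∑ j, Real.exp (v j)

/-- if all entries of `v ∈ ℝ^N` are bounded by `c ≥ 0` in absolute value,
then for every `i`, `|Softmax(v)_i − 1/N| ≤ (exp(2c) − 1)/N`. -/
theorem softmax_close_to_uniform (N : ℕ) (hN : 1 ≤ N) (c : ℝ) (hc : 0 ≤ c)
    (v : Fin N → ℝ) (hv : ∀ i, |v i| ≤ c) (i : Fin N) :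
    |softmax v i - 1 / (N : ℝ)| ≤ (Real.exp (2 * c) - 1) / (N : ℝ) := by
  have hNpos : (0:ℝ) < N := by exact_mod_cast Nat.lt_of_lt_of_le Nat.zero_lt_one hN
  set S := ∑ j, Real.exp (v j) with hSdef
  have hS1 : (N:ℝ) * Real.exp (-c) ≤ S := by
    have : ∀ j ∈ Finset.univ, Real.exp (-c) ≤ Real.exp (v j) := by
      intro j _
      exact Real.exp_le_exp.mpr (neg_le_of_abs_le (hv j))
    calc (N:ℝ) * Real.exp (-c) = ∑ _j : Fin N, Real.exp (-c) := by
          simp [Finset.sum_const, mul_comm]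
      _ ≤ S := Finset.sum_le_sum this
  have hS2 : S ≤ (N:ℝ) * Real.exp c := by
    have : ∀ j ∈ Finset.univ, Real.exp (v j) ≤ Real.exp c := by
      intro j _
      exact Real.exp_le_exp.mpr (le_of_abs_le (hv j))
    calc S ≤ ∑ _j : Fin N, Real.exp c := Finset.sum_le_sum this
      _ = (N:ℝ) * Real.exp c := by simp [Finset.sum_const, mul_comm]
  have hSpos : 0 < S := lt_of_lt_of_le (by positivity) hS1
  have hvi1 : Real.exp (-c) ≤ Real.exp (v i) := Real.exp_le_exp.mpr (neg_le_of_abs_le (hv i))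
  have hvi2 : Real.exp (v i) ≤ Real.exp c := Real.exp_le_exp.mpr (le_of_abs_le (hv i))
  have hsm : softmax v i = Real.exp (v i) / S := rfl
  have hhigh : softmax v i ≤ Real.exp (2 * c) / N := by
    rw [hsm, div_le_div_iff₀ hSpos hNpos]
    have h2c : Real.exp (2 * c) = Real.exp c * Real.exp c := by
      rw [← Real.exp_add]; ring_nf
    have hec : Real.exp (-c) * Real.exp c = 1 := by rw [← Real.exp_add]; simp
    nlinarith [Real.exp_pos c, Real.exp_pos (-c)]
  have hlow : Real.exp (-(2 * c)) / N ≤ softmax v i := by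
    rw [hsm, div_le_div_iff₀ hNpos hSpos]
    have h2c : Real.exp (-(2 * c)) = Real.exp (-c) * Real.exp (-c) := by
      rw [← Real.exp_add]; ring_nf
    have hec : Real.exp (-c) * Real.exp c = 1 := by rw [← Real.exp_add]; simp
    nlinarith [Real.exp_pos c, Real.exp_pos (-c)]
  have hkey : Real.exp (2 * c) + Real.exp (-(2 * c)) ≥ 2 := by
    nlinarith [Real.add_one_le_exp (2 * c), Real.add_one_le_exp (-(2 * c))]
  rw [abs_le]
  constructor
  · have : -((Real.exp (2 * c) - 1) / N) ≤ Real.exp (-(2 * c)) / N - 1 / N := by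
      rw [div_sub_div_same, ← neg_div, div_le_div_iff₀ hNpos hNpos]
      nlinarith
    linarith [hlow]
  · have : softmax v i - 1 / N ≤ Real.exp (2 * c) / N - 1 / N := by linarith
    rw [div_sub_div_same] at this
    exact this
end
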